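/- Let s_π = s_{π(1)}···s_{π(l)} be the Coxeter element of the Weyl group W associated with a permutation π of {1,…,l}. Then 1 − s_π is invertible on the span of the roots, and for all i, j the matrix elements of the Cayley transform of s_π in the basis of simple roots are c_ij^π = ((1+s_π)(1−s_π)^{-1}α_i, α_j) = ε_ij^π b_ij, where ε_ij^π = −1 if π^{-1}(i) < π^{-1}(j), ε_ij^π = 0 if i = j, and ε_ij^π = +1 if π^{-1}(i) > π^{-1}(j). -/

import Mathlib

noncomputable section

/-- invertibility of `1 − s_π` and the matrix elements of the Cayley
transform of a Coxeter element `s_π` in the basis of simple roots. -/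
theorem cayley_transform_of_coxeter_element
    (l : ℕ) (V : Type*) [AddCommGroup V] [Module ℝ V] [FiniteDimensional ℝ V]
    (B : LinearMap.BilinForm ℝ V)
    (hsymm : ∀ x y, B x y = B y x)
    (hpos : ∀ x : V, x ≠ 0 → 0 < B x x)
    (α : Fin l → V)
    (hindep : LinearIndependent ℝ α)
    (hspan : Submodule.span ℝ (Set.range α) = ⊤)
    (a : Matrix (Fin l) (Fin l) ℤ) (d : Fin l → ℕ)
    (ha_diag : ∀ i, a i i = 2)
    (ha_offdiag : ∀ i j, i ≠ j → a i j ≤ 0)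
    (hd_pos : ∀ i, 0 < d i)
    (hd_coprime : Finset.univ.gcd d = 1)
    (hb_symm : ∀ i j, (d i : ℤ) * a i j = (d j : ℤ) * a j i)
    (hB : ∀ i j, B (α i) (α j) = ((d i : ℤ) * a i j : ℤ))
    (s : Fin l → Module.End ℝ V)
    (hs : ∀ i (v : V), s i v = v - (2 * B v (α i) / B (α i) (α i)) • α i)
    (π : Equiv.Perm (Fin l))
    (c : Module.End ℝ V)
    (hc : c = (List.ofFn fun k => s (π k)).prod) :
    ∃ T : Module.End ℝ V, (1 - c) * T = 1 ∧ T * (1 - c) = 1 ∧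
      ∀ i j, B (((1 + c) * T) (α i)) (α j) =
        (if i = j then (0 : ℝ) else if π.symm i < π.symm j then -1 else 1) *
          B (α i) (α j) := by
  classical
  set bas : Module.Basis (Fin l) ℝ V := Module.Basis.mk hindep (by rw [hspan]) with hbasdef
  have hbas : ∀ i, bas i = α i := fun i => Module.Basis.mk_apply _ _ i
  have hdR : ∀ i : Fin l, (0:ℝ) < (d i : ℝ) := fun i => by exact_mod_cast hd_pos i
  -- B v (α i) in coordinates
  have hBv : ∀ (v : V) (i : Fin l),
      B v (α i) = (d i : ℝ) * ∑ m, (a i m : ℝ) * bas.repr v m := by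
    intro v i
    conv_lhs => rw [← bas.sum_repr v]
    rw [map_sum, LinearMap.sum_apply, Finset.mul_sum]
    refine Finset.sum_congr rfl fun m _ => ?_
    rw [map_smul, LinearMap.smul_apply, smul_eq_mul, hbas, hB]
    have h' : ((d m : ℕ) : ℝ) * (a m i : ℝ) = ((d i : ℕ) : ℝ) * (a i m : ℝ) := by
      exact_mod_cast hb_symm m i
    push_cast
    linear_combination (bas.repr v) m * h'
  -- coordinates of a simple reflection
  have hsv : ∀ (i : Fin l) (v : V) (j : Fin l),
      bas.repr (s i v) j
        = bas.repr v j - (if i = j then ∑ m, (a i m : ℝ) * bas.repr v m else 0) := by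
    intro i v j
    have haa : B (α i) (α i) = 2 * (d i : ℝ) := by
      rw [hB, ha_diag]; push_cast; ring
    have ht : 2 * B v (α i) / B (α i) (α i) = ∑ m, (a i m : ℝ) * bas.repr v m := by
      have hne : (d i : ℝ) ≠ 0 := (hdR i).ne'
      rw [hBv, haa]
      field_simp
    rw [hs, ht, map_sub, map_smul, Finsupp.sub_apply, Finsupp.smul_apply,
      ← hbas i, bas.repr_self, Finsupp.single_apply, smul_eq_mul]
    split <;> ring
  -- coordinates not in the list are unchanged
  have NOTIN : ∀ (L : List (Fin l)) (v : V) (j : Fin l), j ∉ L →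
      bas.repr ((L.map s).prod v) j = bas.repr v j := by
    intro L
    induction L with
    | nil => intro v j _; simp
    | cons hd tl ih =>
      intro v j hj
      rw [List.mem_cons, not_or] at hj
      rw [List.map_cons, List.prod_cons, Module.End.mul_apply, hsv,
        if_neg (fun h => hj.1 h.symm), sub_zero, ih _ _ hj.2]
  -- the key update relation for a product of distinct reflections
  have STEP : ∀ (L1 L2 : List (Fin l)) (k : Fin l), (L1 ++ k :: L2).Nodup → ∀ v : V,
      bas.repr (((L1 ++ k :: L2).map s).prod v) k
        = - bas.repr v k - ∑ j ∈ Finset.univ.erase k, (a k j : ℝ) *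
            (if j ∈ L2 then bas.repr (((L1 ++ k :: L2).map s).prod v) j
             else bas.repr v j) := by
    intro L1 L2 k hnd v
    rw [List.nodup_append] at hnd
    obtain ⟨h1, h2, hdisj⟩ := hnd
    rw [List.nodup_cons] at h2
    obtain ⟨hk2, h2⟩ := h2
    have hk1 : k ∉ L1 := fun h => hdisj k h k List.mem_cons_self rfl
    have hprod : ∀ u : V, ((L1 ++ k :: L2).map s).prod u
        = (L1.map s).prod ((s k) ((L2.map s).prod u)) := by
      intro u
      rw [List.map_append, List.prod_append, List.map_cons, List.prod_cons,
        Module.End.mul_apply, Module.End.mul_apply]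
    have e1 : bas.repr (((L1 ++ k :: L2).map s).prod v) k
        = bas.repr ((s k) ((L2.map s).prod v)) k := by
      rw [hprod, NOTIN _ _ _ hk1]
    have key : ∀ m ∈ Finset.univ.erase k,
        (a k m : ℝ) * bas.repr ((L2.map s).prod v) m
          = (a k m : ℝ) * (if m ∈ L2 then bas.repr (((L1 ++ k :: L2).map s).prod v) m
              else bas.repr v m) := by
      intro m hm
      have hmk : m ≠ k := Finset.ne_of_mem_erase hm
      by_cases hm2 : m ∈ L2
      · rw [if_pos hm2]
        have hm1 : m ∉ L1 := fun h => hdisj m h m (List.mem_cons_of_mem _ hm2) rfl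
        rw [hprod, NOTIN _ _ _ hm1, hsv, if_neg (fun h => hmk h.symm), sub_zero]
      · rw [if_neg hm2, NOTIN _ _ _ hm2]
    rw [e1, hsv, if_pos rfl, NOTIN _ _ _ hk2,
      ← Finset.add_sum_erase _ (fun m => (a k m : ℝ) * bas.repr ((L2.map s).prod v) m)
        (Finset.mem_univ k),
      NOTIN _ _ _ hk2, ha_diag, Finset.sum_congr rfl key]
    push_cast
    ring
  -- the full list of reflection indices
  set L : List (Fin l) := List.ofFn (fun k => π k) with hLdef
  have hcL : c = (L.map s).prod := by rw [hc, hLdef, List.map_ofFn]; rfl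
  have hLnd : L.Nodup := List.nodup_ofFn.mpr π.injective
  have hLlen : L.length = l := List.length_ofFn
  have hLget : ∀ (n : ℕ) (h : n < l), L[n]'(by rw [hLlen]; exact h) = π ⟨n, h⟩ := by
    intro n h
    exact List.getElem_ofFn ..
  have hmemdrop : ∀ (t : ℕ) (j : Fin l), j ∈ L.drop t ↔ t ≤ (π.symm j : ℕ) := by
    intro t j
    constructor
    · intro hj
      rw [List.mem_iff_getElem] at hj
      obtain ⟨n, hn, he⟩ := hj
      rw [List.getElem_drop] at he
      have hlen : t + n < l := by
        have := hn
        rw [List.length_drop, hLlen] at this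
        omega
      have he2 : π ⟨t + n, hlen⟩ = j := (hLget (t + n) hlen).symm.trans he
      have h2 : π.symm j = ⟨t + n, hlen⟩ := by rw [← he2]; simp
      have h3 : (π.symm j : ℕ) = t + n := congrArg Fin.val h2
      omega
    · intro ht
      have hlt : (π.symm j : ℕ) < l := (π.symm j).isLt
      rw [List.mem_iff_getElem]
      refine ⟨(π.symm j : ℕ) - t, ?_, ?_⟩
      · rw [List.length_drop, hLlen]; omega
      · rw [List.getElem_drop, hLget (t + ((π.symm j : ℕ) - t)) (by omega)]
        have he : (⟨t + ((π.symm j : ℕ) - t), by omega⟩ : Fin l) = π.symm j := by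
          ext; simp; omega
        rw [he, Equiv.apply_symm_apply]
  -- the key relation for the Coxeter element
  have REL : ∀ (v : V) (i : Fin l),
      bas.repr (c v) i = - bas.repr v i - ∑ j ∈ Finset.univ.erase i, (a i j : ℝ) *
        (if π.symm i < π.symm j then bas.repr (c v) j else bas.repr v j) := by
    intro v i
    have hkl : ((π.symm i : ℕ)) < L.length := by rw [hLlen]; exact (π.symm i).isLt
    have hLk : L[(π.symm i : ℕ)] = i := by
      rw [hLget (π.symm i : ℕ) (π.symm i).isLt]
      have : (⟨(π.symm i : ℕ), (π.symm i).isLt⟩ : Fin l) = π.symm i := by ext; simp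
      rw [this, Equiv.apply_symm_apply]
    have hsplit : L = L.take (π.symm i : ℕ) ++ (i :: L.drop ((π.symm i : ℕ) + 1)) := by
      conv_lhs => rw [← List.take_append_drop (π.symm i : ℕ) L]
      rw [List.drop_eq_getElem_cons hkl, hLk]
    have hstep := STEP (L.take (π.symm i : ℕ)) (L.drop ((π.symm i : ℕ) + 1)) i
      (by rw [← hsplit]; exact hLnd) v
    rw [hcL, hsplit]
    rw [hstep]
    congr 1
    refine Finset.sum_congr rfl fun j hj => ?_
    have hcond : (j ∈ L.drop ((π.symm i : ℕ) + 1)) ↔ (π.symm i < π.symm j) := by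
      rw [hmemdrop, Fin.lt_def]
      omega
    congr 1
    exact if_congr hcond rfl rfl
  -- injectivity of 1 - c
  have hinj : Function.Injective (((1 : Module.End ℝ V) - c)) := by
    rw [← LinearMap.ker_eq_bot, LinearMap.ker_eq_bot']
    intro v hv
    have hcv : c v = v := by
      have h0 : v - c v = 0 := by
        simpa [LinearMap.sub_apply] using hv
      exact (sub_eq_zero.mp h0).symm
    have h0 : ∀ i, B v (α i) = 0 := by
      intro i
      have hr := REL v i
      rw [hcv] at hr
      simp only [ite_self] at hr
      have hsum : ∑ m, (a i m : ℝ) * bas.repr v m = 0 := by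
        rw [← Finset.add_sum_erase _ (fun m => (a i m : ℝ) * bas.repr v m)
          (Finset.mem_univ i), ha_diag]
        push_cast
        linarith [hr]
      rw [hBv, hsum, mul_zero]
    have hBvv : B v v = 0 := by
      have hv2 : B v v = B v (∑ i, bas.repr v i • bas i) := congrArg _ (bas.sum_repr v).symm
      rw [hv2, map_sum]
      refine Finset.sum_eq_zero fun i _ => ?_
      rw [map_smul, smul_eq_mul, hbas, h0, mul_zero]
    by_contra hne
    exact absurd hBvv (ne_of_gt (hpos v hne))
  have hbij : Function.Bijective (((1 : Module.End ℝ V) - c)) :=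
    ⟨hinj, LinearMap.injective_iff_surjective.mp hinj⟩
  obtain ⟨u, hu'⟩ := (Module.End.isUnit_iff ((1 : Module.End ℝ V) - c)).mpr hbij
  have hmulinv : (1 - c) * (↑u⁻¹ : Module.End ℝ V) = 1 := by rw [← hu']; exact u.mul_inv
  have hinvmul : (↑u⁻¹ : Module.End ℝ V) * (1 - c) = 1 := by rw [← hu']; exact u.inv_mul
  refine ⟨(↑u⁻¹ : Module.End ℝ V), hmulinv, hinvmul, ?_⟩
  intro i j
  set w : V := (↑u⁻¹ : Module.End ℝ V) (α i) with hwdef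
  have happ : ((1 + c) * (↑u⁻¹ : Module.End ℝ V)) (α i) = w + c w := by
    rw [Module.End.mul_apply, ← hwdef, LinearMap.add_apply, Module.End.one_apply]
  have hai : w - c w = α i := by
    have h1 : ((1 - c) * (↑u⁻¹ : Module.End ℝ V)) (α i) = α i := by
      rw [hmulinv, Module.End.one_apply]
    rw [Module.End.mul_apply, ← hwdef, LinearMap.sub_apply, Module.End.one_apply] at h1
    exact h1
  have hxy : ∀ m, bas.repr w m - bas.repr (c w) m = if m = i then (1:ℝ) else 0 := by
    intro m
    have h1 : bas.repr (w - c w) m = bas.repr (α i) m := by rw [hai]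
    rw [map_sub, Finsupp.sub_apply] at h1
    rw [h1, ← hbas i, bas.repr_self, Finsupp.single_apply]
    by_cases hmi : m = i
    · rw [if_pos hmi, if_pos hmi.symm]
    · rw [if_neg hmi, if_neg (fun h => hmi h.symm)]
  rw [happ, hBv (w + c w) j, hB i j]
  simp only [map_add, Finsupp.add_apply]
  -- abbreviations
  have hrel := REL w j
  -- split off the diagonal term and rewrite using the relation
  have expand : ∑ m ∈ Finset.univ.erase j, (a j m : ℝ) *
        ((bas.repr w m + bas.repr (c w) m) - 2 *
          (if π.symm j < π.symm m then bas.repr (c w) m else bas.repr w m))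
      = (∑ m ∈ Finset.univ.erase j, (a j m : ℝ) * (bas.repr w m + bas.repr (c w) m))
        - 2 * ∑ m ∈ Finset.univ.erase j, (a j m : ℝ) *
          (if π.symm j < π.symm m then bas.repr (c w) m else bas.repr w m) := by
    rw [Finset.mul_sum, ← Finset.sum_sub_distrib]
    exact Finset.sum_congr rfl fun m _ => by ring
  have hsum : (∑ m, (a j m : ℝ) * (bas.repr w m + bas.repr (c w) m))
      = ∑ m ∈ Finset.univ.erase j, (a j m : ℝ) *
          ((bas.repr w m + bas.repr (c w) m) - 2 *
            (if π.symm j < π.symm m then bas.repr (c w) m else bas.repr w m)) := by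
    rw [← Finset.add_sum_erase _ (fun m => (a j m : ℝ) * (bas.repr w m + bas.repr (c w) m))
      (Finset.mem_univ j), expand, ha_diag, hrel]
    push_cast
    ring
  have heval : ∀ m ∈ Finset.univ.erase j, (a j m : ℝ) *
        ((bas.repr w m + bas.repr (c w) m) - 2 *
          (if π.symm j < π.symm m then bas.repr (c w) m else bas.repr w m))
      = if m = i then (if π.symm j < π.symm i then (a j i : ℝ) else -(a j i : ℝ)) else 0 := by
    intro m hm
    have key : (bas.repr w m + bas.repr (c w) m) - 2 *
          (if π.symm j < π.symm m then bas.repr (c w) m else bas.repr w m)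
        = (if π.symm j < π.symm m then (1:ℝ) else -1) * (bas.repr w m - bas.repr (c w) m) := by
      split <;> ring
    rw [key, hxy m]
    by_cases hmi : m = i
    · subst hmi
      rw [if_pos rfl, if_pos rfl]
      split <;> ring
    · rw [if_neg hmi, if_neg hmi]
      ring
  rw [hsum, Finset.sum_congr rfl heval, Finset.sum_ite_eq' (Finset.univ.erase j) i]
  by_cases hij : i = j
  · subst hij
    rw [if_neg (fun h => (Finset.mem_erase.mp h).1 rfl), if_pos rfl, mul_zero, zero_mul]
  · have hmem : i ∈ Finset.univ.erase j := Finset.mem_erase.mpr ⟨hij, Finset.mem_univ i⟩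
    rw [if_pos hmem, if_neg hij]
    have hsymmne : π.symm i ≠ π.symm j := fun h => hij (by
      have := congrArg π h
      simpa using this)
    have hbs : ((d i : ℕ) : ℝ) * (a i j : ℝ) = ((d j : ℕ) : ℝ) * (a j i : ℝ) := by
      exact_mod_cast hb_symm i j
    by_cases hlt : π.symm i < π.symm j
    · rw [if_pos hlt, if_neg (asymm hlt)]
      push_cast
      linear_combination hbs
    · have hgt : π.symm j < π.symm i := (hsymmne.lt_or_gt.resolve_left hlt)
      rw [if_neg hlt, if_pos hgt]
      push_cast
      linear_combination -hbs
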